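/- Let L ⊆ ℤ² be a subgroup of finite index that contains at least one point (x,y) with gcd(x,y) = 1. Then the number of points (x,y) ∈ L with |x|, |y| ≤ N and gcd(x,y) = 1 is O(N²/[ℤ² : L] + 1), with an absolute implied constant. -/

import Mathlib

lemma decomp (a b : ℤ) (v x : ℤ × ℤ) (hab : a * v.1 + b * v.2 = 1) :
    x = (a * x.1 + b * x.2) • v + (v.1 * x.2 - v.2 * x.1) • ((-b, a) : ℤ × ℤ) := by
  ext
  · simp only [Prod.fst_add, Prod.smul_fst, smul_eq_mul]
    linear_combination (-x.1) * hab
  · simp only [Prod.snd_add, Prod.smul_snd, smul_eq_mul]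
    linear_combination (-x.2) * hab

lemma dvd_det (L : AddSubgroup (ℤ × ℤ)) [L.FiniteIndex] (v w : ℤ × ℤ)
    (hv : v ∈ L) (hw : w ∈ L) (hcop : Int.gcd v.1 v.2 = 1) :
    (L.index : ℤ) ∣ v.1 * w.2 - v.2 * w.1 := by
  obtain ⟨a, b, hab⟩ : IsCoprime v.1 v.2 := Int.isCoprime_iff_gcd_eq_one.mpr hcop
  set u : ℤ × ℤ := (-b, a) with hu
  set g : (ℤ × ℤ) ⧸ L := QuotientAddGroup.mk u with hg
  have hmk : ∀ x : ℤ × ℤ, (QuotientAddGroup.mk x : (ℤ × ℤ) ⧸ L)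
      = (v.1 * x.2 - v.2 * x.1) • g := by
    intro x
    rw [hg, ← QuotientAddGroup.mk_zsmul, QuotientAddGroup.eq]
    have h2 : -x + (v.1 * x.2 - v.2 * x.1) • u = -((a * x.1 + b * x.2) • v) := by
      ext
      · simp only [hu, Prod.fst_add, Prod.fst_neg, Prod.smul_fst, smul_eq_mul]
        linear_combination x.1 * hab
      · simp only [hu, Prod.snd_add, Prod.snd_neg, Prod.smul_snd, smul_eq_mul]
        linear_combination x.2 * hab
    rw [h2]
    exact neg_mem (zsmul_mem hv _)
  have hgen : ∀ y : (ℤ × ℤ) ⧸ L, y ∈ AddSubgroup.zmultiples g := by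
    intro y
    obtain ⟨x, rfl⟩ := QuotientAddGroup.mk_surjective y
    exact ⟨_, (hmk x).symm⟩
  have horder : addOrderOf g = L.index := by
    rw [addOrderOf_eq_card_of_forall_mem_zmultiples hgen, AddSubgroup.index_eq_card]
  have hkill : (v.1 * w.2 - v.2 * w.1) • g = 0 := by
    rw [← hmk w, QuotientAddGroup.eq_zero_iff]
    exact hw
  rw [← horder]
  exact addOrderOf_dvd_iff_zsmul_eq_zero.mpr hkill

lemma par_eq (v w : ℤ × ℤ) (hv : Int.gcd v.1 v.2 = 1) (hw : Int.gcd w.1 w.2 = 1)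
    (h : v.1 * w.2 - v.2 * w.1 = 0) : w = v ∨ w = -v := by
  obtain ⟨a, b, hab⟩ : IsCoprime v.1 v.2 := Int.isCoprime_iff_gcd_eq_one.mpr hv
  set c : ℤ := a * w.1 + b * w.2 with hc
  have hwc : w = c • v := by
    ext
    · simp only [Prod.smul_fst, smul_eq_mul]
      linear_combination (-w.1) * hab - b * h
    · simp only [Prod.smul_snd, smul_eq_mul]
      linear_combination (-w.2) * hab + a * h
  have : c.natAbs * Int.gcd v.1 v.2 = 1 := by
    rw [← Int.gcd_mul_left]
    rw [hwc] at hw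
    simpa using hw
  rw [hv, mul_one] at this
  rcases Int.natAbs_eq_iff.mp this with hc1 | hc1 <;> rw [hwc, hc1] <;> simp

set_option maxHeartbeats 1000000 in
lemma count_aux (m N : ℕ) (hm : 0 < m) (S : Set (ℤ × ℤ)) (hfin : S.Finite)
    (v : ℤ × ℤ) (hv : v ∈ S) (hv1 : 1 ≤ |v.1|) (hv21 : |v.2| ≤ |v.1|)
    (hvN : |v.1| ≤ (N : ℤ))
    (hbox : ∀ w ∈ S, |w.1| ≤ (N : ℤ) ∧ |w.2| ≤ (N : ℤ))
    (hpar : ∀ w ∈ S, v.1 * w.2 - v.2 * w.1 = 0 → w = v ∨ w = -v)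
    (hdvd : ∀ w ∈ S, (m : ℤ) ∣ v.1 * w.2 - v.2 * w.1)
    (hline : ∀ w ∈ S, ∀ w' ∈ S,
      v.1 * w.2 - v.2 * w.1 = v.1 * w'.2 - v.2 * w'.1 → ∃ t : ℤ, w - w' = t • v) :
    (S.ncard : ℝ) ≤ 12 * ((N : ℝ) ^ 2 / (m : ℝ) + 1) := by
  classical
  set M : ℤ := |v.1| with hM
  have hM0 : 0 < M := by omega
  have hm' : (0 : ℤ) < m := by exact_mod_cast hm
  set K₁ : ℤ := 2 * M * N / m with hK₁
  set K₂ : ℤ := 2 * N / M with hK₂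
  have hK1 : 0 ≤ K₁ := Int.ediv_nonneg (by positivity) (le_of_lt hm')
  have hK2 : 0 ≤ K₂ := Int.ediv_nonneg (by positivity) (le_of_lt hM0)
  set S' : Set (ℤ × ℤ) := S \ {v, -v} with hS'
  set F : Finset (ℤ × ℤ) := ((Finset.Icc (-K₁) K₁).erase 0) ×ˢ Finset.Icc 0 K₂ with hF
  set Ψ : ℤ × ℤ → ℤ × ℤ := fun w => ((v.1 * w.2 - v.2 * w.1) / (m : ℤ), (w.1 + N) / M)
    with hΨ
  -- the determinant bound
  have hdb : ∀ w ∈ S, |v.1 * w.2 - v.2 * w.1| ≤ 2 * M * N := by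
    intro w hw
    obtain ⟨hw1, hw2⟩ := hbox w hw
    calc |v.1 * w.2 - v.2 * w.1| ≤ |v.1 * w.2| + |v.2 * w.1| := abs_sub _ _
      _ = |v.1| * |w.2| + |v.2| * |w.1| := by rw [abs_mul, abs_mul]
      _ ≤ M * N + M * N := by
          have h1 : |v.1| * |w.2| ≤ M * N :=
            mul_le_mul (le_of_eq hM.symm) hw2 (abs_nonneg _) (le_of_lt hM0)
          have h2 : |v.2| * |w.1| ≤ M * N :=
            mul_le_mul hv21 hw1 (abs_nonneg _) (le_of_lt hM0)
          linarith
      _ = 2 * M * N := by ring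
  -- Ψ maps S' into F
  have hmaps : ∀ w ∈ S', Ψ w ∈ (F : Set (ℤ × ℤ)) := by
    intro w hw
    obtain ⟨hwS, hwne⟩ := hw
    set d : ℤ := v.1 * w.2 - v.2 * w.1 with hd
    have hd0 : d ≠ 0 := by
      intro h0
      rcases hpar w hwS h0 with h | h <;> exact hwne (by simp [h])
    have hdm : (m : ℤ) ∣ d := hdvd w hwS
    have hk : (m : ℤ) * (d / m) = d := Int.mul_ediv_cancel' hdm
    have hk0 : d / m ≠ 0 := by
      intro h0; rw [h0, mul_zero] at hk; exact hd0 hk.symm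
    have hdb' := hdb w hwS
    rw [abs_le] at hdb'
    have hub : d / m ≤ K₁ := by
      rw [hK₁]
      apply Int.ediv_le_ediv hm'
      omega
    have hlb : -K₁ ≤ d / m := by
      have : (-d) / m ≤ K₁ := by
        rw [hK₁]; apply Int.ediv_le_ediv hm'; omega
      rw [Int.neg_ediv_of_dvd hdm] at this
      omega
    obtain ⟨hw1, _⟩ := hbox w hwS
    rw [abs_le] at hw1
    have h2a : 0 ≤ (w.1 + N) / M := Int.ediv_nonneg (by omega) (le_of_lt hM0)
    have h2b : (w.1 + N) / M ≤ K₂ := by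
      rw [hK₂]; exact Int.ediv_le_ediv hM0 (by omega)
    simp only [hF, Finset.coe_product, Set.mem_prod, Finset.coe_erase, Set.mem_diff,
      Finset.coe_Icc, Set.mem_Icc, Set.mem_singleton_iff]
    exact ⟨⟨⟨hlb, hub⟩, hk0⟩, h2a, h2b⟩
  -- Ψ is injective on S'
  have hinj : Set.InjOn Ψ S' := by
    intro w hw w' hw' heq
    obtain ⟨hwS, _⟩ := hw
    obtain ⟨hw'S, _⟩ := hw'
    have heq1 : (v.1 * w.2 - v.2 * w.1) / (m : ℤ) = (v.1 * w'.2 - v.2 * w'.1) / (m : ℤ) :=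
      congrArg Prod.fst heq
    have heq2 : (w.1 + N) / M = (w'.1 + N) / M := congrArg Prod.snd heq
    have hdq : v.1 * w.2 - v.2 * w.1 = v.1 * w'.2 - v.2 * w'.1 := by
      rw [← Int.mul_ediv_cancel' (hdvd w hwS), ← Int.mul_ediv_cancel' (hdvd w' hw'S), heq1]
    obtain ⟨t, ht⟩ := hline w hwS w' hw'S hdq
    have ht1 : w.1 - w'.1 = t * v.1 := by
      have := congrArg Prod.fst ht
      simpa using this
    -- get M ∣ difference
    have hvcase : v.1 = M ∨ v.1 = -M := by
      rcases abs_choice v.1 with h | h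
      · left; omega
      · right; omega
    obtain ⟨c, hc⟩ : ∃ c : ℤ, (w.1 + N) - (w'.1 + N) = M * c := by
      rcases hvcase with h | h
      · exact ⟨t, by rw [h] at ht1; linarith [ht1]⟩
      · exact ⟨-t, by rw [h] at ht1; linarith [ht1]⟩
    have hxm := Int.mul_ediv_add_emod (w.1 + N) M
    have hym := Int.mul_ediv_add_emod (w'.1 + N) M
    have hr1 : 0 ≤ (w.1 + N) % M := Int.emod_nonneg _ (ne_of_gt hM0)
    have hr2 : (w.1 + N) % M < M := Int.emod_lt_of_pos _ hM0
    have hr1' : 0 ≤ (w'.1 + N) % M := Int.emod_nonneg _ (ne_of_gt hM0)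
    have hr2' : (w'.1 + N) % M < M := Int.emod_lt_of_pos _ hM0
    have hMc : M * c = (w.1 + N) % M - (w'.1 + N) % M := by
      have h1 : M * ((w.1 + N) / M) = M * ((w'.1 + N) / M) := by rw [heq2]
      linarith [hxm, hym, hc]
    have hc0 : c = 0 := by
      rcases lt_trichotomy c 0 with h | h | h
      · nlinarith
      · exact h
      · nlinarith
    have hxy : w.1 = w'.1 := by
      rw [hc0, mul_zero] at hc
      linarith
    have ht0 : t = 0 := by
      have h0 : t * v.1 = 0 := by rw [← ht1, hxy, sub_self]
      rcases mul_eq_zero.mp h0 with h | h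
      · exact h
      · exfalso; rw [h, abs_zero] at hM; omega
    have : w - w' = 0 := by rw [ht, ht0]; simp
    have := sub_eq_zero.mp this
    exact this
  -- cardinality bookkeeping
  have hS'fin : S'.Finite := hfin.diff
  have hsub : S ⊆ insert v (insert (-v) S') := by
    intro w hw
    by_cases h1 : w = v
    · exact Or.inl h1
    · by_cases h2 : w = -v
      · exact Or.inr (Or.inl h2)
      · exact Or.inr (Or.inr ⟨hw, by simp [h1, h2]⟩)
  have hcard1 : S.ncard ≤ 2 + S'.ncard := by
    calc S.ncard ≤ (insert v (insert (-v) S')).ncard :=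
          Set.ncard_le_ncard hsub ((hS'fin.insert _).insert _)
      _ ≤ (insert (-v) S').ncard + 1 := Set.ncard_insert_le _ _
      _ ≤ S'.ncard + 1 + 1 := by gcongr; exact Set.ncard_insert_le _ _
      _ = 2 + S'.ncard := by ring
  have hcard2 : S'.ncard ≤ F.card := by
    have := Set.ncard_le_ncard_of_injOn Ψ hmaps hinj (F.finite_toSet)
    simpa [Set.ncard_coe_finset] using this
  have hFcard : F.card = (2 * K₁).toNat * (K₂ + 1).toNat := by
    rw [hF, Finset.card_product, Finset.card_erase_of_mem (by simp [hK1]), Int.card_Icc,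
      Int.card_Icc]
    congr 1 <;> omega
  -- pass to the reals
  have hK1b : (K₁ : ℝ) * m ≤ 2 * (M : ℝ) * N := by
    have : K₁ * m ≤ 2 * M * N := Int.ediv_mul_le _ (ne_of_gt hm')
    exact_mod_cast this
  have hK2b : (K₂ : ℝ) * M ≤ 2 * (N : ℝ) := by
    have : K₂ * M ≤ 2 * N := Int.ediv_mul_le _ (ne_of_gt hM0)
    exact_mod_cast this
  have hK1r : (0 : ℝ) ≤ K₁ := by exact_mod_cast hK1
  have hK2r : (0 : ℝ) ≤ K₂ := by exact_mod_cast hK2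
  have hMNr : (M : ℝ) ≤ N := by exact_mod_cast hvN
  have hM1r : (1 : ℝ) ≤ M := by exact_mod_cast hM0
  have hm1r : (1 : ℝ) ≤ m := by exact_mod_cast hm
  have hmain : (S.ncard : ℝ) ≤ 2 + 2 * (K₁ : ℝ) * ((K₂ : ℝ) + 1) := by
    have h1 : (S.ncard : ℝ) ≤ 2 + (F.card : ℝ) := by
      have : (S.ncard : ℝ) ≤ 2 + (S'.ncard : ℝ) := by exact_mod_cast hcard1
      have h2 : (S'.ncard : ℝ) ≤ (F.card : ℝ) := by exact_mod_cast hcard2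
      linarith
    have e1 : ((2 * K₁).toNat : ℤ) = 2 * K₁ := Int.toNat_of_nonneg (by omega)
    have e2 : ((K₂ + 1).toNat : ℤ) = K₂ + 1 := Int.toNat_of_nonneg (by omega)
    have h3' : (F.card : ℤ) = 2 * K₁ * (K₂ + 1) := by
      rw [hFcard, Nat.cast_mul, e1, e2]
    have h3 : (F.card : ℝ) = 2 * (K₁ : ℝ) * ((K₂ : ℝ) + 1) := by
      exact_mod_cast h3'
    linarith
  have hdiv : 12 * ((N : ℝ) ^ 2 / (m : ℝ) + 1) = 12 * ((N : ℝ) ^ 2 + m) / m := by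
    field_simp
  rw [hdiv, le_div_iff₀ (by linarith : (0:ℝ) < m)]
  have hx1 : (K₁ : ℝ) * m * (K₂ : ℝ) ≤ 2 * (M : ℝ) * N * K₂ :=
    mul_le_mul_of_nonneg_right hK1b hK2r
  have hx2 : 2 * (N : ℝ) * ((K₂:ℝ) * M) ≤ 2 * (N : ℝ) * (2 * N) :=
    mul_le_mul_of_nonneg_left hK2b (by nlinarith)
  nlinarith [hmain, hK1b, hK2b, hx1, hx2, mul_le_mul_of_nonneg_right hMNr
    (by nlinarith : (0:ℝ) ≤ (N:ℝ)), hK1r, hK2r]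

/-- There is an absolute constant `C` such that for every finite-index
subgroup `L ⊆ ℤ²` containing at least one point with coprime coordinates, and every `N`,
the number of points `(x, y) ∈ L` with `|x|, |y| ≤ N` and `gcd(x, y) = 1` is at most
`C * (N² / [ℤ² : L] + 1)`. -/

theorem stmt2 :
    ∃ C : ℝ, 0 < C ∧
      ∀ (L : AddSubgroup (ℤ × ℤ)), L.FiniteIndex →
        (∃ v ∈ L, Int.gcd v.1 v.2 = 1) →
        ∀ N : ℕ,
          ({v : ℤ × ℤ | v ∈ L ∧ |v.1| ≤ (N : ℤ) ∧ |v.2| ≤ (N : ℤ) ∧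
              Int.gcd v.1 v.2 = 1}.ncard : ℝ)
            ≤ C * ((N : ℝ) ^ 2 / (L.index : ℝ) + 1) := by
  refine ⟨12, by norm_num, ?_⟩
  intro L hFI _hex N
  haveI := hFI
  set S := {v : ℤ × ℤ | v ∈ L ∧ |v.1| ≤ (N : ℤ) ∧ |v.2| ≤ (N : ℤ) ∧
      Int.gcd v.1 v.2 = 1} with hS
  have hm : 0 < L.index := Nat.pos_of_ne_zero hFI.index_ne_zero
  have hmR : (0 : ℝ) < (L.index : ℝ) := by exact_mod_cast hm
  have hfin : S.Finite := by
    apply Set.Finite.subset (Set.finite_Icc ((-(N : ℤ), -(N : ℤ))) ((N : ℤ), (N : ℤ)))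
    rintro ⟨x, y⟩ ⟨-, hx, hy, -⟩
    rw [abs_le] at hx hy
    exact Set.mem_Icc.mpr ⟨⟨hx.1, hy.1⟩, hx.2, hy.2⟩
  rcases Set.eq_empty_or_nonempty S with hE | ⟨v, hv⟩
  · rw [hE]
    simp only [Set.ncard_empty, Nat.cast_zero]
    positivity
  · obtain ⟨hvL, hv1N, hv2N, hvcop⟩ := hv
    have hv' : v ∈ S := ⟨hvL, hv1N, hv2N, hvcop⟩
    obtain ⟨a, b, hab⟩ : IsCoprime v.1 v.2 := Int.isCoprime_iff_gcd_eq_one.mpr hvcop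
    have hvne : 1 ≤ max |v.1| |v.2| := by
      by_contra h
      push_neg at h
      have h1 : v.1 = 0 := by
        have := abs_nonneg v.1; have := le_max_left |v.1| |v.2|
        have : |v.1| = 0 := by omega
        exact abs_eq_zero.mp this
      have h2 : v.2 = 0 := by
        have := abs_nonneg v.2; have := le_max_right |v.1| |v.2|
        have : |v.2| = 0 := by omega
        exact abs_eq_zero.mp this
      rw [h1, h2] at hvcop
      simp at hvcop
    have hbox : ∀ w ∈ S, |w.1| ≤ (N : ℤ) ∧ |w.2| ≤ (N : ℤ) := fun w hw => ⟨hw.2.1, hw.2.2.1⟩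
    have hpar : ∀ w ∈ S, v.1 * w.2 - v.2 * w.1 = 0 → w = v ∨ w = -v :=
      fun w hw h => par_eq v w hvcop hw.2.2.2 h
    have hdvd : ∀ w ∈ S, (L.index : ℤ) ∣ v.1 * w.2 - v.2 * w.1 :=
      fun w hw => dvd_det L v w hvL hw.1 hvcop
    have hline : ∀ w ∈ S, ∀ w' ∈ S,
        v.1 * w.2 - v.2 * w.1 = v.1 * w'.2 - v.2 * w'.1 → ∃ t : ℤ, w - w' = t • v := by
      intro w _ w' _ h
      refine ⟨a * (w.1 - w'.1) + b * (w.2 - w'.2), ?_⟩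
      ext
      · simp only [Prod.fst_sub, Prod.smul_fst, smul_eq_mul]
        linear_combination (-(w.1 - w'.1)) * hab - b * h
      · simp only [Prod.snd_sub, Prod.smul_snd, smul_eq_mul]
        linear_combination (-(w.2 - w'.2)) * hab + a * h
    by_cases hc : |v.2| ≤ |v.1|
    · exact count_aux L.index N hm S hfin v hv' (by omega) hc hv1N hbox hpar hdvd hline
    · push_neg at hc
      set S₂ : Set (ℤ × ℤ) := Prod.swap '' S with hS₂
      have hncard : S₂.ncard = S.ncard := Set.ncard_image_of_injective S Prod.swap_injective
      have hfin₂ : S₂.Finite := hfin.image _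
      set v₂ : ℤ × ℤ := (v.2, v.1) with hv₂def
      have hv₂ : v₂ ∈ S₂ := ⟨v, hv', rfl⟩
      have key : (S₂.ncard : ℝ) ≤ 12 * ((N : ℝ) ^ 2 / (L.index : ℝ) + 1) := by
        apply count_aux L.index N hm S₂ hfin₂ v₂ hv₂ (by simp [hv₂def]; omega)
          (by simp [hv₂def]; omega) (by simp [hv₂def]; omega)
        · rintro w ⟨z, hz, rfl⟩
          exact ⟨(hbox z hz).2, (hbox z hz).1⟩
        · rintro w ⟨z, hz, rfl⟩ h
          have h' : v.1 * z.2 - v.2 * z.1 = 0 := by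
            simp only [hv₂def, Prod.fst_swap, Prod.snd_swap] at h
            linarith
          rcases hpar z hz h' with h1 | h1
          · left; rw [h1]; rfl
          · right; rw [h1]; rfl
        · rintro w ⟨z, hz, rfl⟩
          have := hdvd z hz
          simp only [hv₂def, Prod.fst_swap, Prod.snd_swap]
          have h2 : v.2 * z.1 - v.1 * z.2 = -(v.1 * z.2 - v.2 * z.1) := by ring
          rw [h2]
          exact dvd_neg.mpr this
        · rintro w ⟨z, hz, rfl⟩ w' ⟨z', hz', rfl⟩ h
          have h' : v.1 * z.2 - v.2 * z.1 = v.1 * z'.2 - v.2 * z'.1 := by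
            simp only [hv₂def, Prod.fst_swap, Prod.snd_swap] at h
            linarith
          obtain ⟨t, ht⟩ := hline z hz z' hz' h'
          refine ⟨t, ?_⟩
          have h1 := congrArg Prod.fst ht
          have h2 := congrArg Prod.snd ht
          simp only [Prod.fst_sub, Prod.snd_sub, Prod.smul_fst, Prod.smul_snd] at h1 h2
          ext <;>
            simp only [hv₂def, Prod.fst_swap, Prod.snd_swap, Prod.fst_sub, Prod.snd_sub,
              Prod.smul_fst, Prod.smul_snd] <;> [exact h2; exact h1]
      rw [← hncard]
      exact key
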